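/- Let R be a commutative ring, N an R-module, and M ⊆ N a submodule. Define the w-closure of M in N by cl_N(M) = {x ∈ N : Jx ⊆ M for some GV-ideal J of R}. Then the w-closure operation is idempotent: cl_N(cl_N(M)) = cl_N(M). In particular, for a GV-torsion-free R-module M with w-envelope M_w taken inside an injective hull, one has (M_w)_w = M_w. -/

import Mathlib

universe u v

section WDefs

variable (R : Type u) [CommRing R]

/-- The canonical `R`-linear map `R → Hom_R(J, R)`, `r ↦ (j ↦ r * j)`. -/
def gvCanonicalMap (J : Ideal R) : R →ₗ[R] (J →ₗ[R] R) where
  toFun r := r • (J.subtype)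
  map_add' x y := add_smul x y _
  map_smul' r x := by simp [mul_smul]

/-- A finitely generated ideal `J` of `R` is a GV-ideal (Glaz–Vasconcelos ideal)
if the canonical map `R → Hom_R(J, R)` is an isomorphism. -/
def IsGVIdeal (J : Ideal R) : Prop :=
  J.FG ∧ Function.Bijective (gvCanonicalMap R J)

/-- An ideal `I` of `R` is a w-ideal if whenever `J x ⊆ I` for some GV-ideal `J`,
then `x ∈ I`. -/
def IsWIdeal (I : Ideal R) : Prop :=
  ∀ x : R, (∃ J : Ideal R, IsGVIdeal R J ∧ ∀ j ∈ J, j * x ∈ I) → x ∈ I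

/-- `m` is a maximal w-ideal: maximal among the proper w-ideals of `R`. -/
def IsMaxWIdeal (m : Ideal R) : Prop :=
  IsWIdeal R m ∧ m ≠ ⊤ ∧ ∀ I : Ideal R, IsWIdeal R I → I ≠ ⊤ → m ≤ I → I = m

variable {M : Type v} [AddCommGroup M] [Module R M]

/-- `x` is a GV-torsion element if it is killed by some GV-ideal. -/
def IsGVTorsionElem (x : M) : Prop :=
  ∃ J : Ideal R, IsGVIdeal R J ∧ ∀ j ∈ J, j • x = 0

variable (M)

/-- `M` is GV-torsion-free if it has no nonzero GV-torsion element. -/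
def IsGVTorsionFree : Prop := ∀ x : M, IsGVTorsionElem R x → x = 0

/-- `M` is GV-torsion if all its elements are GV-torsion. -/
def IsGVTorsion : Prop := ∀ x : M, IsGVTorsionElem R x

/-- `M` is a w-module: GV-torsion-free and every map from a GV-ideal to `M`
extends to `R`. -/
def IsWModule : Prop :=
  IsGVTorsionFree R M ∧
    ∀ J : Ideal R, IsGVIdeal R J → ∀ f : J →ₗ[R] M,
      ∃ g : R →ₗ[R] M, ∀ x : J, g (x : R) = f x

end WDefs


section GVLemmas

variable {R : Type u} [CommRing R]

lemma gvCanonicalMap_apply (J : Ideal R) (r : R) (j : J) :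
    gvCanonicalMap R J r j = r * (j : R) := rfl

lemma gv_ann {J : Ideal R} (hJ : IsGVIdeal R J) {r : R}
    (h : ∀ j ∈ J, r * j = 0) : r = 0 := by
  have heq : gvCanonicalMap R J r = gvCanonicalMap R J 0 := by
    ext j
    simp only [gvCanonicalMap_apply, h j j.2, zero_mul]
  simpa using hJ.2.1 heq

lemma gv_top : IsGVIdeal R (⊤ : Ideal R) := by
  refine ⟨⟨{1}, by simp⟩, ?_, ?_⟩
  · intro a b hab
    have := LinearMap.congr_fun hab ⟨1, trivial⟩
    simpa [gvCanonicalMap_apply] using this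
  · intro f
    refine ⟨f ⟨1, trivial⟩, ?_⟩
    ext x
    have hx : (x : ↥(⊤ : Ideal R)) = (x : R) • (⟨1, trivial⟩ : ↥(⊤ : Ideal R)) := by
      ext; simp
    rw [gvCanonicalMap_apply, hx, map_smul, smul_eq_mul, mul_comm]
    simp

lemma IsGVIdeal.mul {J K : Ideal R} (hJ : IsGVIdeal R J) (hK : IsGVIdeal R K) :
    IsGVIdeal R (J * K) := by
  refine ⟨Submodule.FG.mul hJ.1 hK.1, ?_, ?_⟩
  · -- injectivity
    intro a b hab
    have hsub : ∀ x ∈ J * K, (a - b) * x = 0 := by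
      intro x hx
      have h := LinearMap.congr_fun hab ⟨x, hx⟩
      rw [gvCanonicalMap_apply, gvCanonicalMap_apply] at h
      rw [sub_mul, h, sub_self]
    have h1 : a - b = 0 := by
      apply gv_ann hK
      intro k hk
      apply gv_ann hJ
      intro j hj
      have := hsub (j * k) (Ideal.mul_mem_mul hj hk)
      calc (a - b) * k * j = (a - b) * (j * k) := by ring
        _ = 0 := this
    exact sub_eq_zero.mp h1
  · -- surjectivity
    intro f
    have hu : ∀ (k : R) (hk : k ∈ K), ∃! r : R,
        ∀ j : J, f ⟨(j : R) * k, Ideal.mul_mem_mul j.2 hk⟩ = r * j := by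
      intro k hk
      obtain ⟨r, hr⟩ := hJ.2.2
        ({ toFun := fun j => f ⟨(j : R) * k, Ideal.mul_mem_mul j.2 hk⟩
           map_add' := fun a b => by
             rw [← map_add]
             exact congrArg f (Subtype.ext (by simp [add_mul]))
           map_smul' := fun c a => by
             rw [← map_smul]
             exact congrArg f (Subtype.ext (by simp [smul_eq_mul, mul_assoc])) } : J →ₗ[R] R)
      have hrj : ∀ j : J, f ⟨(j : R) * k, Ideal.mul_mem_mul j.2 hk⟩ = r * j := by
        intro j
        exact (LinearMap.congr_fun hr j).symm
      refine ⟨r, hrj, fun r' hr' => ?_⟩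
      apply sub_eq_zero.mp
      apply gv_ann hJ
      intro j hj
      rw [sub_mul, ← hr' ⟨j, hj⟩, hrj ⟨j, hj⟩, sub_self]
    classical
    set gfun : ↥K → R := fun k => (hu (k : R) k.2).choose with hgfun
    have gspec : ∀ (k : ↥K) (j : J),
        f ⟨(j : R) * (k : R), Ideal.mul_mem_mul j.2 k.2⟩ = gfun k * j :=
      fun k => (hu (k : R) k.2).choose_spec.1
    have guniq : ∀ (k : ↥K) (r' : R),
        (∀ j : J, f ⟨(j : R) * (k : R), Ideal.mul_mem_mul j.2 k.2⟩ = r' * j) →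
        r' = gfun k :=
      fun k r' h => (hu (k : R) k.2).choose_spec.2 r' h
    obtain ⟨ρ, hρ⟩ := hK.2.2
      { toFun := gfun
        map_add' := fun k1 k2 => by
          refine (guniq (k1 + k2) (gfun k1 + gfun k2) fun j => ?_).symm
          have he : (⟨(j : R) * ((k1 + k2 : ↥K) : R),
              Ideal.mul_mem_mul j.2 (k1 + k2).2⟩ : ↥(J * K)) =
              ⟨(j : R) * (k1 : R), Ideal.mul_mem_mul j.2 k1.2⟩ +
              ⟨(j : R) * (k2 : R), Ideal.mul_mem_mul j.2 k2.2⟩ :=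
            Subtype.ext (by push_cast; ring)
          rw [he, map_add, gspec k1 j, gspec k2 j, add_mul]
        map_smul' := fun c k => by
          refine (guniq (c • k) (c * gfun k) fun j => ?_).symm
          have he : (⟨(j : R) * ((c • k : ↥K) : R),
              Ideal.mul_mem_mul j.2 (c • k).2⟩ : ↥(J * K)) =
              c • ⟨(j : R) * (k : R), Ideal.mul_mem_mul j.2 k.2⟩ :=
            Subtype.ext (by simp [smul_eq_mul]; ring)
          rw [he, map_smul, gspec k j, smul_eq_mul]
          ring }
    refine ⟨ρ, ?_⟩
    ext a
    obtain ⟨a, ha⟩ := a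
    rw [gvCanonicalMap_apply]
    refine (Submodule.mul_induction_on'
      (C := fun a ha => f ⟨a, ha⟩ = ρ * a) ?_ ?_ ha).symm
    · intro j hj k hk
      have h1 := gspec ⟨k, hk⟩ ⟨j, hj⟩
      have h2 : ρ * k = gfun ⟨k, hk⟩ := LinearMap.congr_fun hρ ⟨k, hk⟩
      rw [h1, ← h2]
      ring
    · intro x hx y hy hfx hfy
      have he : (⟨x + y, Submodule.add_mem _ hx hy⟩ : ↥(J * K)) =
          ⟨x, hx⟩ + ⟨y, hy⟩ := rfl
      rw [he, map_add, hfx, hfy, mul_add]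

end GVLemmas

/-- The w-closure of a subset `M` of an `R`-module `N`:
all `x ∈ N` with `J x ⊆ M` for some GV-ideal `J`. -/
def wClosure (R : Type u) [CommRing R] {N : Type v} [AddCommGroup N] [Module R N]
    (M : Set N) : Set N :=
  {x | ∃ J : Ideal R, IsGVIdeal R J ∧ ∀ j ∈ J, j • x ∈ M}

section Witness

variable {R : Type u} [CommRing R]
variable {N : Type v} [AddCommGroup N] [Module R N]

lemma finset_gv_witness (M : Submodule R N) (x : N) (s : Finset R)
    (h : ∀ j ∈ s, j • x ∈ wClosure R (M : Set N)) :
    ∃ P : Ideal R, IsGVIdeal R P ∧ ∀ j ∈ s, ∀ p ∈ P, (p * j) • x ∈ M := by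
  classical
  induction s using Finset.induction_on with
  | empty => exact ⟨⊤, gv_top, by simp⟩
  | insert _ _ hns ih =>
    rename_i a s
    obtain ⟨P, hP, hPmem⟩ := ih (fun j hj => h j (Finset.mem_insert_of_mem hj))
    obtain ⟨Ja, hJa, hja⟩ := h a (Finset.mem_insert_self a s)
    refine ⟨Ja * P, hJa.mul hP, ?_⟩
    intro j hj p hp
    rcases Finset.mem_insert.mp hj with rfl | hj'
    · rw [mul_smul]
      exact hja p ((Ideal.mul_le.2 fun r hr t _ => Ja.mul_mem_right t hr) hp)
    · exact hPmem j hj' p (Ideal.mul_le_right hp)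


end Witness

/-- The w-closure operation on submodules is idempotent:
`cl_N(cl_N(M)) = cl_N(M)`. -/
theorem wClosure_idem (R : Type u) [CommRing R] {N : Type v} [AddCommGroup N] [Module R N]
    (M : Submodule R N) :
    wClosure R (wClosure R (M : Set N)) = wClosure R (M : Set N) := by
  apply Set.eq_of_subset_of_subset
  · rintro x ⟨J, hJ, h⟩
    obtain ⟨s, hs⟩ := hJ.1
    obtain ⟨P, hP, hPmem⟩ := finset_gv_witness M x s
      (fun j hj => h j (hs ▸ Ideal.subset_span hj))
    have key : ∀ j ∈ J, ∀ p ∈ P, (p * j) • x ∈ M := by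
      intro j hj
      rw [← hs] at hj
      induction hj using Submodule.span_induction with
      | mem j hjs => exact fun p hp => hPmem j hjs p hp
      | zero => intro p hp; simp
      | add y z _ _ hy hz =>
        intro p hp
        have : (p * (y + z)) • x = (p * y) • x + (p * z) • x := by
          rw [mul_add, add_smul]
        rw [this]
        exact M.add_mem (hy p hp) (hz p hp)
      | smul c y _ hy =>
        intro p hp
        have : (p * (c • y)) • x = c • ((p * y) • x) := by
          rw [smul_eq_mul, smul_smul]
          exact congrArg (fun r : R => r • x) (by ring)
        rw [this]
        exact M.smul_mem c (hy p hp)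
    refine ⟨P * J, hP.mul hJ, ?_⟩
    intro a ha
    refine Submodule.mul_induction_on ha (fun p hp j hj => key j hj p hp) ?_
    intro y z hy hz
    rw [add_smul]
    exact M.add_mem hy hz
  · rintro x ⟨J, hJ, h⟩
    refine ⟨J, hJ, fun j hj => ⟨⊤, gv_top, fun t _ => ?_⟩⟩
    exact M.smul_mem t (h j hj)
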